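/- Fix N ≥ 1, let w̃ be a filter on ZMod N, and let w = w̃ ⋆ w̃ be the associated double convolution filter. Define P : (ZMod N → ℂ) → (ZMod N → ℂ) as the unique linear map such that for every s and every character index k, (ℱ(P s))(k) = (ℱs)(k) if (ℱw)(k) = 0 and (ℱ(P s))(k) = 0 otherwise. Then for every s : ZMod N → ℂ, the sequence of iterates 𝒱_w^p s converges to P s as p → ∞ (in the Euclidean norm on ZMod N → ℂ). -/

import Mathlib

open Finset Filter

/-- The discrete Fourier transform on `ZMod N`:
`(ℱs)(k) = Σ_j s(j) exp(−2πi jk/N)`. -/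
noncomputable def discreteFourier (N : ℕ) [NeZero N] (s : ZMod N → ℂ) (k : ZMod N) : ℂ :=
  ∑ j : ZMod N,
    s j * Complex.exp (-(2 * (Real.pi : ℂ) * Complex.I * ((j.val : ℂ) * (k.val : ℂ)) / (N : ℂ)))

/-- The fluctuation operator `𝒱_w s = s − w ⋆ s` on `ZMod N`, for a real-valued
`w` acting on a complex signal `s`. -/
noncomputable def fluctuation {N : ℕ} [NeZero N] (w : ZMod N → ℝ) (s : ZMod N → ℂ) :
    ZMod N → ℂ :=
  fun g => s g - ∑ h : ZMod N, (w (g - h) : ℂ) * s h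

/-- The Euclidean norm `‖t‖₂ = sqrt(Σ_g |t(g)|²)` on `ZMod N → ℂ`. -/
noncomputable def l2norm {N : ℕ} [NeZero N] (t : ZMod N → ℂ) : ℝ :=
  Real.sqrt (∑ g : ZMod N, ‖t g‖ ^ 2)

open ZMod in
lemma discreteFourier_eq_dft (N : ℕ) [NeZero N] (s : ZMod N → ℂ) (k : ZMod N) :
    discreteFourier N s k = ZMod.dft s k := by
  rw [discreteFourier, ZMod.dft_apply]
  refine Finset.sum_congr rfl fun j _ => ?_
  rw [smul_eq_mul, mul_comm]
  congr 1
  have h1 : (-(j * k) : ZMod N) = ((-(j.val * k.val : ℤ) : ℤ) : ZMod N) := by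
    push_cast
    simp [ZMod.natCast_val, ZMod.intCast_cast]
  rw [h1, ZMod.stdAddChar_coe]
  congr 1
  push_cast
  ring_nf

lemma conj_stdAddChar {N : ℕ} [NeZero N] (x : ZMod N) :
    (starRingEnd ℂ) (ZMod.stdAddChar x) = ZMod.stdAddChar (-x) := by
  have h1 : ‖(ZMod.stdAddChar x : ℂ)‖ = 1 := by
    rw [ZMod.stdAddChar_apply, Circle.norm_coe]
  rw [← Complex.inv_eq_conj h1, ← AddChar.map_neg_eq_inv]

lemma abs_stdAddChar {N : ℕ} [NeZero N] (x : ZMod N) :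
    ‖(ZMod.stdAddChar x : ℂ)‖ = 1 := by
  rw [ZMod.stdAddChar_apply, Circle.norm_coe]

lemma dft_conv {N : ℕ} [NeZero N] (u v : ZMod N → ℂ) (k : ZMod N) :
    ZMod.dft (fun g => ∑ h : ZMod N, u (g - h) * v h) k = ZMod.dft u k * ZMod.dft v k := by
  rw [ZMod.dft_apply, ZMod.dft_apply, ZMod.dft_apply]
  simp only [smul_eq_mul, Finset.mul_sum, Finset.sum_mul]
  rw [Finset.sum_comm]
  refine Finset.sum_congr rfl fun b _ => ?_
  refine Fintype.sum_equiv (Equiv.addRight b).symm _ _ fun x => ?_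
  simp only [Equiv.coe_addRight, Equiv.symm_apply_apply, Equiv.addRight_symm_apply]
  have h2 : (-(x * k) : ZMod N) = -((x - b) * k) + -(b * k) := by ring
  rw [h2, AddChar.map_add_eq_mul]
  ring


lemma dft_real_even {N : ℕ} [NeZero N] (wt : ZMod N → ℝ) (hwe : ∀ g, wt (-g) = wt g)
    (k : ZMod N) :
    (starRingEnd ℂ) (ZMod.dft (fun g => (wt g : ℂ)) k) = ZMod.dft (fun g => (wt g : ℂ)) k := by
  rw [ZMod.dft_apply, map_sum]
  simp only [smul_eq_mul, map_mul, conj_stdAddChar, Complex.conj_ofReal, neg_neg]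
  refine Fintype.sum_equiv (Equiv.neg _) _ _ fun x => ?_
  simp [Equiv.neg_apply, hwe, neg_mul, neg_neg]

/-- For a double convolution filter `w = w̃ ⋆ w̃` on `ZMod N`,
the iterates `𝒱_w^p s` converge in Euclidean norm, as `p → ∞`, to `P s` where `P`
is the linear map defined on the Fourier side by keeping exactly the frequencies
where `ℱw` vanishes. -/
theorem fluctuation_iterate_tendsto_projection (N : ℕ) [NeZero N] (hN : 1 ≤ N)
    (wt : ZMod N → ℝ)
    (hw0 : ∀ g, 0 ≤ wt g) (hwe : ∀ g, wt (-g) = wt g) (hw1 : ∑ g : ZMod N, wt g = 1)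
    (w : ZMod N → ℝ) (hw : ∀ g, w g = ∑ h : ZMod N, wt (g - h) * wt h)
    (P : (ZMod N → ℂ) →ₗ[ℂ] (ZMod N → ℂ))
    (hP : ∀ s : ZMod N → ℂ, ∀ k : ZMod N,
      discreteFourier N (P s) k =
        if discreteFourier N (fun g => (w g : ℂ)) k = 0 then discreteFourier N s k else 0)
    (s : ZMod N → ℂ) :
    Tendsto (fun p : ℕ => l2norm (fun g => (fluctuation w)^[p] s g - P s g))
      atTop (nhds 0) := by
  classical
  set wC : ZMod N → ℂ := fun g => (w g : ℂ) with hwC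
  set wtC : ZMod N → ℂ := fun g => (wt g : ℂ) with hwtC
  set Λ : ZMod N → ℂ := fun k => ZMod.dft wC k with hΛ
  set μ : ZMod N → ℂ := fun k => ZMod.dft wtC k with hμ
  -- w is the convolution square of wt, on the complex side
  have hwconv : wC = fun g => ∑ h : ZMod N, wtC (g - h) * wtC h := by
    funext g
    rw [hwC]
    simp only [hwtC]
    rw [hw g]
    push_cast
    rfl
  have hΛμ : ∀ k, Λ k = μ k * μ k := by
    intro k
    rw [hΛ]
    simp only [hwconv]
    exact dft_conv wtC wtC k
  -- μ is real
  have hμconj : ∀ k, μ k = ((μ k).re : ℂ) := by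
    intro k
    have := dft_real_even wt hwe k
    exact (Complex.conj_eq_iff_re.mp (by rw [hμ]; exact this)).symm
  -- |μ| ≤ 1
  have hμabs : ∀ k, ‖μ k‖ ≤ 1 := by
    intro k
    have he : μ k = ∑ j : ZMod N, ZMod.stdAddChar (-(j * k)) * wtC j := by
      simp only [hμ, ZMod.dft_apply, smul_eq_mul]
    rw [he]
    refine le_trans (norm_sum_le _ _) ?_
    have hterm : ∀ j : ZMod N, ‖ZMod.stdAddChar (-(j * k)) * wtC j‖ = wt j := by
      intro j
      rw [norm_mul, abs_stdAddChar, one_mul, hwtC]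
      simp [Complex.norm_real, abs_of_nonneg (hw0 j)]
    rw [Finset.sum_congr rfl (fun j _ => hterm j), hw1]
  -- norm bound when Λ k ≠ 0
  have hlt : ∀ k, Λ k ≠ 0 → ‖(1 : ℂ) - Λ k‖ < 1 := by
    intro k hk
    set r : ℝ := (μ k).re with hr
    have hΛr : Λ k = ((r ^ 2 : ℝ) : ℂ) := by
      rw [hΛμ k, hμconj k, ← hr]
      push_cast
      ring
    have hrabs : |r| ≤ 1 := by
      have := hμabs k
      rwa [hμconj k, ← hr, Complex.norm_real, Real.norm_eq_abs] at this
    have hr2 : r ^ 2 ≤ 1 := by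
      calc r ^ 2 = |r| * |r| := by rw [← sq_abs]; ring
      _ ≤ 1 := mul_le_one₀ hrabs (abs_nonneg r) hrabs
    have hrne : r ^ 2 ≠ 0 := by
      intro h0
      apply hk
      rw [hΛr, h0]
      simp
    have hrpos : 0 < r ^ 2 := lt_of_le_of_ne (sq_nonneg r) (Ne.symm hrne)
    have : (1 : ℂ) - Λ k = ((1 - r ^ 2 : ℝ) : ℂ) := by rw [hΛr]; push_cast; ring
    rw [this, Complex.norm_real, Real.norm_eq_abs, abs_of_nonneg (by linarith)]
    linarith
  -- Fourier side of the fluctuation operator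
  have hVdft : ∀ (t : ZMod N → ℂ) (k : ZMod N),
      ZMod.dft (fluctuation w t) k = (1 - Λ k) * ZMod.dft t k := by
    intro t k
    have h1 : fluctuation w t = t - fun g => ∑ h : ZMod N, wC (g - h) * t h := by
      funext g
      simp [fluctuation, hwC]
    rw [h1, map_sub, Pi.sub_apply, dft_conv wC t k]
    have hΛk : ZMod.dft wC k = Λ k := rfl
    rw [hΛk]
    ring
  have hVit : ∀ (p : ℕ) (k : ZMod N),
      ZMod.dft ((fluctuation w)^[p] s) k = (1 - Λ k) ^ p * ZMod.dft s k := by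
    intro p
    induction p with
    | zero => intro k; simp
    | succ p ih =>
      intro k
      rw [Function.iterate_succ_apply', hVdft, ih, pow_succ]
      ring
  have hPd : ∀ k, ZMod.dft (P s) k = if Λ k = 0 then ZMod.dft s k else 0 := by
    intro k
    have h := hP s k
    rw [discreteFourier_eq_dft, discreteFourier_eq_dft, discreteFourier_eq_dft] at h
    exact h
  -- Fourier coefficients of the difference tend to 0
  have hck : ∀ k : ZMod N,
      Tendsto (fun p : ℕ => ZMod.dft ((fluctuation w)^[p] s) k - ZMod.dft (P s) k)
        atTop (nhds 0) := by
    intro k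
    by_cases h : Λ k = 0
    · have hz : ∀ p : ℕ,
          ZMod.dft ((fluctuation w)^[p] s) k - ZMod.dft (P s) k = 0 := by
        intro p
        rw [hVit p k, hPd k, if_pos h, h]
        simp
      simp only [hz]
      exact tendsto_const_nhds
    · have h2 : Tendsto (fun p : ℕ => ((1 : ℂ) - Λ k) ^ p) atTop (nhds 0) :=
        tendsto_pow_atTop_nhds_zero_of_norm_lt_one (hlt k h)
      have h3 := h2.mul_const (ZMod.dft s k)
      rw [zero_mul] at h3
      refine h3.congr fun p => ?_
      rw [hVit p k, hPd k, if_neg h, sub_zero]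
  -- pointwise convergence of the signal
  have hpt : ∀ g : ZMod N,
      Tendsto (fun p : ℕ => (fluctuation w)^[p] s g - P s g) atTop (nhds 0) := by
    intro g
    have key : ∀ p : ℕ, (fluctuation w)^[p] s g - P s g
        = (N : ℂ)⁻¹ * ∑ j : ZMod N, ZMod.stdAddChar (j * g) *
            (ZMod.dft ((fluctuation w)^[p] s) j - ZMod.dft (P s) j) := by
      intro p
      calc (fluctuation w)^[p] s g - P s g
          = ((fluctuation w)^[p] s - P s) g := rfl
        _ = (ZMod.dft.symm (ZMod.dft ((fluctuation w)^[p] s - P s))) g := by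
            rw [LinearEquiv.symm_apply_apply]
        _ = _ := by
            rw [ZMod.invDFT_apply]
            simp only [map_sub, Pi.sub_apply, smul_eq_mul]
    have hsum : Tendsto (fun p : ℕ => ∑ j : ZMod N, ZMod.stdAddChar (j * g) *
        (ZMod.dft ((fluctuation w)^[p] s) j - ZMod.dft (P s) j)) atTop (nhds 0) := by
      have h := tendsto_finset_sum (Finset.univ : Finset (ZMod N))
        (fun j _ => (hck j).const_mul (ZMod.stdAddChar (j * g) : ℂ))
      simpa using h
    have h2 := hsum.const_mul ((N : ℂ)⁻¹)
    rw [mul_zero] at h2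
    exact h2.congr fun p => (key p).symm
  -- sum of squared moduli tends to 0
  have hsum2 : Tendsto (fun p : ℕ => ∑ g : ZMod N,
      ‖(fluctuation w)^[p] s g - P s g‖ ^ 2) atTop (nhds 0) := by
    have h := tendsto_finset_sum (Finset.univ : Finset (ZMod N)) (fun g _ => by
      have h1 := ((hpt g).norm).pow 2
      simpa using h1)
    simpa using h
  have hfin := (Real.continuous_sqrt.tendsto 0).comp hsum2
  rw [Real.sqrt_zero] at hfin
  exact hfin.congr fun p => rfl
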